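/- Let a be a positive integer, M = [[a,1],[-1,0]], and let (x_k) be a sequence of 2×2 symmetric matrices in GL₂(ℤ) with x_{k+1} = x_k S_k x_{k-1} (S_k = M for even k, Mᵀ for odd k). Writing x_k = [[x_{k,0}, x_{k,1}],[x_{k,1}, x_{k,2}]] and ε_k = det(x_k), the Cayley–Hamilton identity gives x_{k+2} = a·x_{k,0}·x_{k+1} - ε_k·x_{k-1} for all k ≥ 1. -/
import Mathlib

set_option maxHeartbeats 1000000 in
open Matrix in
theorem stmt_11 (a : ℤ) (ha : 0 < a)
    (S : ℕ → Matrix (Fin 2) (Fin 2) ℤ)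
    (hS : ∀ k, S k = if Even k then !![a, 1; -1, 0] else (!![a, 1; -1, 0])ᵀ)
    (x : ℕ → Matrix (Fin 2) (Fin 2) ℤ)
    (hsym : ∀ k, (x k)ᵀ = x k)
    (hunit : ∀ k, IsUnit (x k).det)
    (hrec : ∀ k, x (k + 2) = x (k + 1) * S (k + 1) * x k) :
    ∀ k, x (k + 3) = (a * x (k + 1) 0 0) • x (k + 2) - (x (k + 1)).det • x k := by
  intro k
  have hp : x (k+1) 1 0 = x (k+1) 0 1 := by
    conv_lhs => rw [← hsym (k+1)]
    simp [Matrix.transpose_apply]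
  have h2 := hrec k
  have hs2 := hsym (k+2)
  rw [h2, Matrix.transpose_mul, Matrix.transpose_mul, hsym, hsym] at hs2
  have h3 : x (k+3) = x (k+2) * S (k+2) * x (k+1) := hrec (k+1)
  have hST : (S (k+1))ᵀ = S (k+2) := by
    rw [hS (k+1), hS (k+2)]
    have h12 : Even (k+2) ↔ Even k := by simp [Nat.even_add]
    rcases Nat.even_or_odd k with he | ho
    · rw [if_neg (by simp [Nat.even_add_one, he]), if_pos (h12.mpr he),
        Matrix.transpose_transpose]
    · rw [if_pos (by simp [Nat.even_add_one, Nat.not_even_iff_odd.mpr ho]),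
        if_neg (by rw [h12]; exact Nat.not_even_iff_odd.mpr ho)]
  rw [h3, h2, ← hs2, hST, hS (k+2)]
  rcases Nat.even_or_odd (k+2) with he | ho <;>
    [rw [if_pos he]; rw [if_neg (Nat.not_even_iff_odd.mpr ho)]] <;>
  · set p := x (k+1); set q := x k
    rw [Matrix.det_fin_two p]
    ext i j
    fin_cases i <;> fin_cases j <;>
      simp only [Matrix.sub_apply, Matrix.smul_apply, smul_eq_mul, Matrix.mul_apply,
        Fin.sum_univ_two, Matrix.transpose_apply, Matrix.cons_val', Matrix.cons_val_zero,
        Matrix.cons_val_one, Matrix.head_cons, Matrix.head_fin_const, Matrix.empty_val',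
        Matrix.cons_val_fin_one, Matrix.of_apply, Fin.zero_eta, Fin.mk_one, hp] <;> ring
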